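/- Let f : ℝⁿ → ℝ be differentiable, g : ℝⁿ → ℝ convex, α > 0, μ > 0. Suppose F = f + g has global minimum value F*, and for all x: (1/2)‖x - prox_{αg}(x - α∇f(x))‖₂² ≥ μα²(F(x) - F*). Then any differentiable solution x(·) of ẋ = -x + prox_{αg}(x - α∇f(x)) satisfies F(x(t)) - F* ≤ e^{-2μαt}(F(x(0)) - F*) for all t ≥ 0. -/

import Mathlib

open Set Filter Metric Real
open scoped Topology InnerProductSpace

set_option maxHeartbeats 1000000 in
lemma prox_key {n : ℕ} (g : EuclideanSpace ℝ (Fin n) → ℝ)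
    (f' prox : EuclideanSpace ℝ (Fin n) → EuclideanSpace ℝ (Fin n))
    (hg : ConvexOn ℝ Set.univ g) {α : ℝ} (hα : 0 < α)
    (hprox : ∀ y u, α * g (prox y) + ‖prox y - (y - α • f' y)‖ ^ 2 / 2 ≤
                    α * g u + ‖u - (y - α • f' y)‖ ^ 2 / 2)
    (y : EuclideanSpace ℝ (Fin n)) :
    g (prox y) - g y + ⟪f' y, prox y - y⟫_ℝ ≤ -(‖prox y - y‖ ^ 2 / α) := by
  set p := prox y with hp
  set v := p - y with hv
  set c := p - (y - α • f' y) with hc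
  have hcv : c = v + α • f' y := by rw [hc, hv]; abel
  have hstep : ∀ s : ℝ, 0 < s → s ≤ 1 →
      0 ≤ α * (g y - g p) + ⟪c, -v⟫_ℝ + s / 2 * ‖v‖ ^ 2 := by
    intro s hs hs1
    have hu := hprox y ((1 - s) • p + s • y)
    have hcvx := hg.2 (mem_univ p) (mem_univ y) (by linarith : (0:ℝ) ≤ 1 - s) hs.le
      (by ring : (1 - s) + s = 1)
    have hpt : (1 - s) • p + s • y - (y - α • f' y) = c + s • (-v) := by
      rw [hc, hv]; module
    rw [hpt] at hu
    have hexp : ‖c + s • (-v)‖ ^ 2 = ‖c‖ ^ 2 + 2 * (s * ⟪c, -v⟫_ℝ) + s ^ 2 * ‖v‖ ^ 2 := by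
      rw [norm_add_sq_real, real_inner_smul_right, norm_smul]
      rw [norm_neg, Real.norm_eq_abs, abs_of_pos hs]
      ring
    rw [hexp] at hu
    have hgle : g ((1 - s) • p + s • y) ≤ (1 - s) * g p + s * g y := by
      simpa using hcvx
    have := hu.trans (by nlinarith [hgle] : α * g ((1 - s) • p + s • y) +
        (‖c‖ ^ 2 + 2 * (s * ⟪c, -v⟫_ℝ) + s ^ 2 * ‖v‖ ^ 2) / 2 ≤
        α * ((1 - s) * g p + s * g y) +
        (‖c‖ ^ 2 + 2 * (s * ⟪c, -v⟫_ℝ) + s ^ 2 * ‖v‖ ^ 2) / 2)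
    nlinarith [this]
  have h0 : 0 ≤ α * (g y - g p) + ⟪c, -v⟫_ℝ := by
    have htend : Tendsto (fun s : ℝ => α * (g y - g p) + ⟪c, -v⟫_ℝ + s / 2 * ‖v‖ ^ 2)
        (𝓝[>] (0:ℝ)) (𝓝 (α * (g y - g p) + ⟪c, -v⟫_ℝ)) := by
      have : Continuous (fun s : ℝ => α * (g y - g p) + ⟪c, -v⟫_ℝ + s / 2 * ‖v‖ ^ 2) := by
        continuity
      have h := (this.tendsto 0).mono_left (nhdsWithin_le_nhds : 𝓝[>] (0:ℝ) ≤ 𝓝 0)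
      simpa using h
    refine ge_of_tendsto htend ?_
    filter_upwards [Ioc_mem_nhdsGT_of_mem (by simp : (0:ℝ) ∈ Ico (0:ℝ) 1)] with s hs
    exact hstep s hs.1 hs.2
  have hinner : ⟪c, -v⟫_ℝ = -‖v‖ ^ 2 - α * ⟪f' y, v⟫_ℝ := by
    rw [hcv, inner_neg_right, inner_add_left, real_inner_smul_left, real_inner_self_eq_norm_sq]
    rw [real_inner_comm]
    ring
  rw [hinner] at h0
  have hcc : ‖v‖ ^ 2 / α * α = ‖v‖ ^ 2 := div_mul_cancel₀ _ hα.ne'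
  nlinarith [h0]

set_option maxHeartbeats 1000000

/-- Theorem 3(iii): under the flow-based PL-type condition, the cost converges
exponentially with rate `2μα` along the proximal gradient dynamics. -/
theorem cost_exp_convergence_flow_condition {n : ℕ}
    (f g : EuclideanSpace ℝ (Fin n) → ℝ)
    (f' prox : EuclideanSpace ℝ (Fin n) → EuclideanSpace ℝ (Fin n))
    (hf : ∀ y, HasGradientAt f (f' y) y)
    (hg : ConvexOn ℝ Set.univ g) (α μ : ℝ) (hα : 0 < α) (hμ : 0 < μ)
    (Fstar : ℝ)
    (hmin : ∀ y, Fstar ≤ f y + g y)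
    (hattained : ∃ xstar, f xstar + g xstar = Fstar)
    (hprox : ∀ y u, α * g (prox y) + ‖prox y - (y - α • f' y)‖ ^ 2 / 2 ≤
                    α * g u + ‖u - (y - α • f' y)‖ ^ 2 / 2)
    (hcond : ∀ y, (1 / 2) * ‖y - prox y‖ ^ 2 ≥ μ * α ^ 2 * (f y + g y - Fstar))
    (x : ℝ → EuclideanSpace ℝ (Fin n))
    (hx : ∀ t, 0 ≤ t → HasDerivAt x (-x t + prox (x t)) t) :
    ∀ t, 0 ≤ t →
      f (x t) + g (x t) - Fstar ≤
        Real.exp (-(2 * μ * α) * t) * (f (x 0) + g (x 0) - Fstar) := by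
  intro T hT
  set φ : ℝ → ℝ := fun s => f (x s) + g (x s) - Fstar with hφ
  have hgL : LocallyLipschitz g := hg.locallyLipschitz
  have hfc : Continuous f := by
    rw [continuous_iff_continuousAt]
    exact fun y => (hf y).hasFDerivAt.continuousAt
  -- continuity of φ on [0, T]
  have hφc : ContinuousOn φ (Icc 0 T) := by
    have hxc : ContinuousOn x (Icc 0 T) := fun s hs =>
      (hx s hs.1).continuousAt.continuousWithinAt
    exact ((hfc.comp_continuousOn hxc).add
      (hgL.continuous.comp_continuousOn hxc)).sub continuousOn_const
  -- slope condition
  have hslope : ∀ s ∈ Ico 0 T, ∀ r, -(2 * μ * α) * φ s < r →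
      ∃ᶠ z in 𝓝[>] s, (z - s)⁻¹ * (φ z - φ s) < r := by
    intro s hs r hr
    set y := x s with hy
    set v := -x s + prox (x s) with hvdef
    have hvy : v = prox y - y := by rw [hvdef, hy]; abel
    have hxd : HasDerivAt x v s := hx s hs.1
    -- derivative of f ∘ x
    have hfd : HasDerivAt (fun τ => f (x τ)) (⟪f' y, v⟫_ℝ) s := by
      have := (hf y).hasFDerivAt.comp_hasDerivAt s hxd
      simp [InnerProductSpace.toDual_apply_apply] at this
      exact this
    have hfslope : Tendsto (fun z => (z - s)⁻¹ * (f (x z) - f (x s))) (𝓝[>] s)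
        (𝓝 (⟪f' y, v⟫_ℝ)) := by
      have := (hasDerivAt_iff_tendsto_slope.1 hfd).mono_left
        (nhdsWithin_mono s (fun z hz => ne_of_gt hz) : 𝓝[>] s ≤ 𝓝[≠] s)
      simpa [slope_def_field, slope_fun_def_field, div_eq_inv_mul, sub_div] using this
    -- slope of x tends to v
    have hxslope : Tendsto (fun z => ‖(z - s)⁻¹ • (x z - x s) - v‖) (𝓝[>] s) (𝓝 0) := by
      have h1 := (hasDerivAt_iff_tendsto_slope.1 hxd).mono_left
        (nhdsWithin_mono s (fun z hz => ne_of_gt hz) : 𝓝[>] s ≤ 𝓝[≠] s)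
      have h2 : Tendsto (fun z => ‖slope x s z - v‖) (𝓝[>] s) (𝓝 ‖v - v‖) :=
        (continuous_norm.tendsto _).comp (h1.sub tendsto_const_nhds)
      simpa [slope, vsub_eq_sub] using h2
    -- local Lipschitz data for g near y
    obtain ⟨K, U, hU, hK⟩ := hgL y
    obtain ⟨ε, hε, hball⟩ := Metric.mem_nhds_iff.1 hU
    -- eventually: x z ∈ ball y ε
    have hxball : ∀ᶠ z in 𝓝[>] s, x z ∈ ball y ε := by
      have : Tendsto x (𝓝[>] s) (𝓝 y) :=
        (hxd.continuousAt.tendsto).mono_left nhdsWithin_le_nhds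
      exact this (ball_mem_nhds y hε)
    have hτsmall : ∀ᶠ z in 𝓝[>] s, z - s ≤ 1 ∧ (z - s) * (‖v‖ + 1) < ε := by
      have h1 : Tendsto (fun z : ℝ => z - s) (𝓝[>] s) (𝓝 0) := by
        simpa using ((continuous_sub_right s).tendsto s).mono_left
          (nhdsWithin_le_nhds : 𝓝[Set.Ioi s] s ≤ 𝓝 s)
      have h2 : Tendsto (fun z : ℝ => (z - s) * (‖v‖ + 1)) (𝓝[>] s) (𝓝 0) := by
        simpa using h1.mul_const (‖v‖ + 1)
      filter_upwards [h1 (Iic_mem_nhds one_pos : Iic (1:ℝ) ∈ 𝓝 (0:ℝ)),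
        h2 (Iio_mem_nhds hε : Iio ε ∈ 𝓝 (0:ℝ))] with z hz1 hz2
      exact ⟨hz1, hz2⟩
    have hτpos : ∀ᶠ z in 𝓝[>] s, s < z := self_mem_nhdsWithin
    -- pointwise bound on the slope of φ
    have hptwise : ∀ᶠ z in 𝓝[>] s,
        (z - s)⁻¹ * (φ z - φ s) ≤ (z - s)⁻¹ * (f (x z) - f (x s)) +
          (g (prox y) - g y) + K * ‖(z - s)⁻¹ • (x z - x s) - v‖ := by
      filter_upwards [hxball, hτsmall, hτpos] with z hzball hzs hzpos
      have hτ0 : 0 < z - s := by linarith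
      -- convexity step
      have hcvx : g (y + (z - s) • v) ≤ g y + (z - s) * (g (prox y) - g y) := by
        have h := hg.2 (mem_univ y) (mem_univ (prox y))
          (by linarith [hzs.1] : (0:ℝ) ≤ 1 - (z - s)) hτ0.le
          (by ring : (1 - (z - s)) + (z - s) = 1)
        have heq : (1 - (z - s)) • y + (z - s) • prox y = y + (z - s) • v := by
          rw [hvy]; module
        rw [heq] at h
        simp only [smul_eq_mul] at h
        linarith [h]
      -- Lipschitz step
      have hyτU : y + (z - s) • v ∈ U := by
        apply hball
        have : ‖(z - s) • v‖ < ε := by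
          rw [norm_smul, Real.norm_eq_abs, abs_of_pos hτ0]
          nlinarith [hzs.2, hτ0, norm_nonneg v]
        simpa [mem_ball, dist_eq_norm] using this
      have hlip : g (x z) - g (y + (z - s) • v) ≤ K * ‖x z - (y + (z - s) • v)‖ := by
        have h := hK.dist_le_mul (x z) (hball hzball) (y + (z - s) • v) hyτU
        rw [dist_eq_norm] at h
        calc g (x z) - g (y + (z - s) • v) ≤ |g (x z) - g (y + (z - s) • v)| := le_abs_self _
          _ = dist (g (x z)) (g (y + (z - s) • v)) := by rw [Real.dist_eq]
          _ ≤ K * ‖x z - (y + (z - s) • v)‖ := h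
      have hnorm : ‖x z - (y + (z - s) • v)‖ = (z - s) * ‖(z - s)⁻¹ • (x z - x s) - v‖ := by
        have heq2 : x z - (y + (z - s) • v) = (z - s) • ((z - s)⁻¹ • (x z - x s) - v) := by
          rw [smul_sub, smul_inv_smul₀ hτ0.ne', hy]; abel
        rw [heq2, norm_smul, Real.norm_eq_abs, abs_of_pos hτ0]
      have hsy : g (x s) = g y := by rw [hy]
      have hgpart : g (x z) - g (x s) ≤ (z - s) * (g (prox y) - g y) +
          K * ((z - s) * ‖(z - s)⁻¹ • (x z - x s) - v‖) := by
        rw [hnorm] at hlip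
        calc g (x z) - g (x s) = (g (x z) - g (y + (z - s) • v)) +
              (g (y + (z - s) • v) - g y) := by rw [hsy]; ring
          _ ≤ K * ((z - s) * ‖(z - s)⁻¹ • (x z - x s) - v‖) +
              (z - s) * (g (prox y) - g y) := by
                have h2 : g (y + (z - s) • v) - g y ≤ (z - s) * (g (prox y) - g y) := by
                  linarith [hcvx]
                exact add_le_add hlip h2
          _ = (z - s) * (g (prox y) - g y) +
              K * ((z - s) * ‖(z - s)⁻¹ • (x z - x s) - v‖) := by ring
      have hφsplit : φ z - φ s = (f (x z) - f (x s)) + (g (x z) - g (x s)) := by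
        simp only [hφ]; ring
      rw [hφsplit, mul_add]
      have hgslope : (z - s)⁻¹ * (g (x z) - g (x s)) ≤
          (g (prox y) - g y) + K * ‖(z - s)⁻¹ • (x z - x s) - v‖ := by
        rw [inv_mul_le_iff₀ hτ0]
        calc g (x z) - g (x s) ≤ (z - s) * (g (prox y) - g y) +
              K * ((z - s) * ‖(z - s)⁻¹ • (x z - x s) - v‖) := hgpart
          _ = (z - s) * ((g (prox y) - g y) + K * ‖(z - s)⁻¹ • (x z - x s) - v‖) := by ring
      linarith [hgslope]
    -- limit of the RHS
    have hrhs : Tendsto (fun z => (z - s)⁻¹ * (f (x z) - f (x s)) +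
        (g (prox y) - g y) + K * ‖(z - s)⁻¹ • (x z - x s) - v‖) (𝓝[>] s)
        (𝓝 (⟪f' y, v⟫_ℝ + (g (prox y) - g y) + K * 0)) :=
      (hfslope.add tendsto_const_nhds).add (hxslope.const_mul _)
    -- the limit is below r
    have hlim : ⟪f' y, v⟫_ℝ + (g (prox y) - g y) + (K:ℝ) * 0 < r := by
      have hkey := prox_key g f' prox hg hα hprox y
      rw [← hvy] at hkey
      have hc := hcond y
      have hvn : ‖y - prox y‖ = ‖v‖ := by rw [hvy, norm_sub_rev]
      rw [hvn] at hc
      have hφs : f y + g y - Fstar = φ s := by rw [hy]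
      rw [hφs] at hc
      have h1 : -(‖v‖ ^ 2 / α) ≤ -(2 * μ * α) * φ s := by
        have h2 : 2 * μ * α * φ s * α ≤ ‖v‖ ^ 2 := by
          clear_value φ v; nlinarith [hc]
        have h3 : 2 * μ * α * φ s ≤ ‖v‖ ^ 2 / α := (le_div_iff₀ hα).2 h2
        linarith
      calc ⟪f' y, v⟫_ℝ + (g (prox y) - g y) + (K:ℝ) * 0
          = g (prox y) - g y + ⟪f' y, v⟫_ℝ := by ring
        _ ≤ -(‖v‖ ^ 2 / α) := hkey
        _ ≤ -(2 * μ * α) * φ s := h1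
        _ < r := hr
    have hev : ∀ᶠ z in 𝓝[>] s, (z - s)⁻¹ * (φ z - φ s) < r := by
      filter_upwards [hptwise, hrhs (Iio_mem_nhds hlim : Iio r ∈ 𝓝 _)] with z h1 h2
      exact lt_of_le_of_lt h1 h2
    exact hev.frequently
  -- bound
  have hbound : ∀ s ∈ Ico 0 T, -(2 * μ * α) * φ s ≤ -(2 * μ * α) * φ s + 0 := by
    intro s _; simp
  have := le_gronwallBound_of_liminf_deriv_right_le (f := φ)
    (f' := fun s => -(2 * μ * α) * φ s) (δ := φ 0) (K := -(2 * μ * α)) (ε := 0)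
    hφc hslope le_rfl hbound T ⟨hT, le_rfl⟩
  rw [gronwallBound_ε0, sub_zero] at this
  calc f (x T) + g (x T) - Fstar = φ T := rfl
    _ ≤ φ 0 * Real.exp (-(2 * μ * α) * T) := this
    _ = Real.exp (-(2 * μ * α) * T) * (f (x 0) + g (x 0) - Fstar) := by
        rw [mul_comm]
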